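/- The 3-dimensional space of 4×4 zero-column-sum matrices of the form with off-diagonal entries (1,2)=(2,1)=α+κ, (1,3)=(1,4)=(2,3)=(2,4)=α, (3,1)=(3,2)=(4,1)=(4,2)=β, (3,4)=(4,3)=β+κ (diagonals chosen for zero column sums), with α, β, κ ∈ ℝ, is closed under the commutator [A,B] = AB - BA. -/
import Mathlib

set_option maxHeartbeats 1000000

theorem mul_fin_four' {α : Type*} [AddCommMonoid α] [Mul α]
    (a11 a12 a13 a14 a21 a22 a23 a24 a31 a32 a33 a34 a41 a42 a43 a44
     b11 b12 b13 b14 b21 b22 b23 b24 b31 b32 b33 b34 b41 b42 b43 b44 : α) :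
    !![a11, a12, a13, a14;
       a21, a22, a23, a24;
       a31, a32, a33, a34;
       a41, a42, a43, a44] * !![b11, b12, b13, b14;
                                b21, b22, b23, b24;
                                b31, b32, b33, b34;
                                b41, b42, b43, b44] =
    !![a11*b11 + a12*b21 + a13*b31 + a14*b41, a11*b12 + a12*b22 + a13*b32 + a14*b42, a11*b13 + a12*b23 + a13*b33 + a14*b43, a11*b14 + a12*b24 + a13*b34 + a14*b44;
       a21*b11 + a22*b21 + a23*b31 + a24*b41, a21*b12 + a22*b22 + a23*b32 + a24*b42, a21*b13 + a22*b23 + a23*b33 + a24*b43, a21*b14 + a22*b24 + a23*b34 + a24*b44;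
       a31*b11 + a32*b21 + a33*b31 + a34*b41, a31*b12 + a32*b22 + a33*b32 + a34*b42, a31*b13 + a32*b23 + a33*b33 + a34*b43, a31*b14 + a32*b24 + a33*b34 + a34*b44;
       a41*b11 + a42*b21 + a43*b31 + a44*b41, a41*b12 + a42*b22 + a43*b32 + a44*b42, a41*b13 + a42*b23 + a43*b33 + a44*b43, a41*b14 + a42*b24 + a43*b34 + a44*b44] := by
  ext i j
  fin_cases i <;> fin_cases j <;>
    simp [Matrix.mul_apply, dotProduct, Fin.sum_univ_succ, ← add_assoc]

/-- A general element of Model 3.4 of the Lie-Markov hierarchy (the linear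
version of HKY*): off-diagonal entries `(1,2)=(2,1)=α+κ`,
`(1,3)=(1,4)=(2,3)=(2,4)=α`, `(3,1)=(3,2)=(4,1)=(4,2)=β`, `(3,4)=(4,3)=β+κ`,
diagonals chosen so every column sums to zero. -/
def M34 (α β κ : ℝ) : Matrix (Fin 4) (Fin 4) ℝ :=
  !![-(α + κ + 2*β), α + κ, α, α;
     α + κ, -(α + κ + 2*β), α, α;
     β, β, -(2*α + β + κ), β + κ;
     β, β, β + κ, -(2*α + β + κ)]

/-- Model 3.4 is closed under the commutator `[A,B] = A*B - B*A`. -/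
theorem model34_closed_under_bracket (α₁ β₁ κ₁ α₂ β₂ κ₂ : ℝ) :
    ∃ α β κ : ℝ,
      M34 α₁ β₁ κ₁ * M34 α₂ β₂ κ₂ - M34 α₂ β₂ κ₂ * M34 α₁ β₁ κ₁ = M34 α β κ := by
  refine ⟨2*(α₁*β₂ - α₂*β₁), -(2*(α₁*β₂ - α₂*β₁)), 0, ?_⟩
  unfold M34
  rw [mul_fin_four', mul_fin_four', sub_eq_iff_eq_add]
  ext i j
  fin_cases i <;> fin_cases j <;> simp [Matrix.add_apply, Matrix.vecHead, Matrix.vecTail] <;> ring
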